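/- Let B be a k-by-k reciprocal matrix with constant row sums. If B is not the all-ones matrix, then B is not well-behaved: its maximal and minimal row sums satisfy r₁ − r_k = 0 < 1, and f(1 + r_k − r₁) = f(1) < 0, where f(x) = 1/x + Σ_{i=2}^{k} 1/(r₁−r_i+x) + 1 − r₁ − x. -/
import Mathlib


open Matrix BigOperators Finset

/-- A positive square matrix is reciprocal if `A j i = 1 / A i j` for all `i, j`. -/
def IsReciprocal {n : ℕ} (A : Matrix (Fin n) (Fin n) ℝ) : Prop :=
  (∀ i j, 0 < A i j) ∧ ∀ i j, A j i = 1 / A i j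

/-- A reciprocal matrix is consistent if `A i j * A j k = A i k` for all `i, j, k`. -/
def IsConsistent {n : ℕ} (A : Matrix (Fin n) (Fin n) ℝ) : Prop :=
  IsReciprocal A ∧ ∀ i j k, A i j * A j k = A i k

/-- A vector is positive if all its entries are positive. -/
def PosVec {n : ℕ} (w : Fin n → ℝ) : Prop := ∀ i, 0 < w i

/-- A positive vector `w` is efficient for `A` if any positive vector `v` whose associated
consistent matrix approximates `A` at least as well as that of `w` (entrywise) is a positive
multiple of `w`. -/
def IsEfficient {n : ℕ} (A : Matrix (Fin n) (Fin n) ℝ) (w : Fin n → ℝ) : Prop :=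
  PosVec w ∧ ∀ v : Fin n → ℝ, PosVec v →
    (∀ i j, |A i j - v i / v j| ≤ |A i j - w i / w j|) →
    ∃ c : ℝ, 0 < c ∧ v = c • w

/-- The `i`-th row sum of a matrix. -/
noncomputable def rowSum {n : ℕ} (A : Matrix (Fin n) (Fin n) ℝ) (i : Fin n) : ℝ := ∑ j, A i j

/-- Given the row sums `r` in nonincreasing order (`r 0` the largest), the auxiliary function
`f(x) = 1/x + ∑_{i=2}^{k} 1/(r₁ - rᵢ + x) + 1 - r₁ - x` (note the `i = 1` term of the sum is
`1/x` since `r 0 - r 0 = 0`). -/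
noncomputable def auxF {k : ℕ} (r : Fin (k + 1) → ℝ) (x : ℝ) : ℝ :=
  (∑ i, 1 / (r 0 - r i + x)) + 1 - r 0 - x

/-- A reciprocal matrix `B` is well-behaved if, with row sums `r₁ ≥ ⋯ ≥ r_k`, either
`r₁ - r_k ≥ 1` (type I), or `r₁ - r_k < 1` and `f(1 + r_k - r₁) ≥ 0` (type II). -/
def WellBehaved {k : ℕ} (B : Matrix (Fin (k + 1)) (Fin (k + 1)) ℝ) : Prop :=
  ∃ σ : Equiv.Perm (Fin (k + 1)), Antitone (rowSum B ∘ σ) ∧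
    (1 ≤ rowSum B (σ 0) - rowSum B (σ (Fin.last k)) ∨
      (rowSum B (σ 0) - rowSum B (σ (Fin.last k)) < 1 ∧
        0 ≤ auxF (rowSum B ∘ σ) (1 + rowSum B (σ (Fin.last k)) - rowSum B (σ 0))))

/-- A reciprocal matrix with constant row sums that is not the all-ones matrix is not
well-behaved: its largest and smallest row sums coincide, and `f(1) < 0`. -/
theorem stmt15 {k : ℕ} (B : Matrix (Fin (k + 1)) (Fin (k + 1)) ℝ) (hB : IsReciprocal B)
    (hconst : ∀ i, rowSum B i = rowSum B 0) (hne : ¬ ∀ i j, B i j = 1) :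
    ¬ WellBehaved B ∧ rowSum B 0 - rowSum B (Fin.last k) = 0 ∧
      auxF (rowSum B) 1 < 0 := by
  obtain ⟨hpos, hrec⟩ := hB
  set r := rowSum B 0 with hr
  obtain ⟨i0, j0, hij0⟩ : ∃ i j, B i j ≠ 1 := by
    by_contra h; push_neg at h; exact hne h
  have hkey : ((k : ℝ) + 1) < r := by
    have h1 : ∑ p : Fin (k+1) × Fin (k+1), B p.2 p.1 = ∑ p : Fin (k+1) × Fin (k+1), B p.1 p.2 :=
      Fintype.sum_equiv (Equiv.prodComm _ _) _ _ (fun p => rfl)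
    have h2 : ∑ p : Fin (k+1) × Fin (k+1), B p.1 p.2
        = ∑ p : Fin (k+1) × Fin (k+1), (B p.1 p.2 + B p.2 p.1) / 2 := by
      rw [← Finset.sum_div, Finset.sum_add_distrib, h1]; ring
    have hlt : ∑ p : Fin (k+1) × Fin (k+1), (1:ℝ)
        < ∑ p : Fin (k+1) × Fin (k+1), (B p.1 p.2 + B p.2 p.1) / 2 := by
      apply Finset.sum_lt_sum
      · intro p _
        have hb := hpos p.1 p.2
        rw [hrec p.1 p.2]
        have h2b : 2 ≤ B p.1 p.2 + 1 / B p.1 p.2 := by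
          nlinarith [sq_nonneg (B p.1 p.2 - 1), mul_one_div_cancel hb.ne']
        linarith
      · refine ⟨(i0, j0), Finset.mem_univ _, ?_⟩
        have hb := hpos i0 j0
        rw [hrec i0 j0]
        have hsq : 0 < (B i0 j0 - 1)^2 := by
          have : B i0 j0 - 1 ≠ 0 := sub_ne_zero.mpr hij0
          positivity
        have h2b : 2 < B i0 j0 + 1 / B i0 j0 := by
          nlinarith [mul_one_div_cancel hb.ne']
        linarith
    have htot : ∑ p : Fin (k+1) × Fin (k+1), B p.1 p.2 = ((k:ℝ)+1) * r := by
      rw [Fintype.sum_prod_type]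
      have hc : ∀ i : Fin (k+1), ∑ j, B i j = r := fun i => hconst i
      rw [Finset.sum_congr rfl (fun i _ => hc i), Finset.sum_const, Finset.card_univ,
        Fintype.card_fin, nsmul_eq_mul]
      push_cast; ring
    have hcard : ∑ p : Fin (k+1) × Fin (k+1), (1:ℝ) = ((k:ℝ)+1) * ((k:ℝ)+1) := by
      rw [Finset.sum_const, Finset.card_univ, Fintype.card_prod, Fintype.card_fin,
        nsmul_eq_mul, mul_one]
      push_cast; ring
    rw [hcard, ← h2, htot] at hlt
    have hk1 : (0:ℝ) < (k:ℝ)+1 := by positivity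
    exact lt_of_mul_lt_mul_left hlt (le_of_lt hk1)
  have hauxval : ∀ (r' : Fin (k+1) → ℝ), (∀ i, r' i = r) → auxF r' 1 = ((k:ℝ)+1) - r := by
    intro r' hr'
    unfold auxF
    have h1 : ∀ i : Fin (k+1), 1 / (r' 0 - r' i + 1) = (1:ℝ) := by
      intro i; rw [hr' 0, hr' i]; simp
    rw [Finset.sum_congr rfl (fun i _ => h1 i), Finset.sum_const, Finset.card_univ,
      Fintype.card_fin, nsmul_eq_mul, mul_one, hr' 0]
    push_cast; ring
  refine ⟨?_, ?_, ?_⟩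
  · rintro ⟨σ, -, hcase⟩
    have hr' : ∀ i, (rowSum B ∘ σ) i = r := fun i => hconst (σ i)
    have h0 : rowSum B (σ 0) = r := hconst _
    have hl : rowSum B (σ (Fin.last k)) = r := hconst _
    rcases hcase with h | ⟨-, h⟩
    · rw [h0, hl] at h; linarith
    · rw [h0, hl] at h
      have he : (1 : ℝ) + r - r = 1 := by ring
      rw [he, hauxval _ hr'] at h
      linarith
  · rw [hconst (Fin.last k)]; ring
  · rw [hauxval (rowSum B) hconst]; linarith
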